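/- For all n, m ≥ 0, all permutations w ∈ S(n), τ ∈ S(m), and all nonnegative integers l, r with l + r = n, the following identities hold in S(n+m): (i) w′ *_l τ *_r w″ = (12)^{m,l,r} ∘ (τ×w) ∘ ((12)^{m,l,r})⁻¹, i.e. the insertion equals Ad((12)^{m,l,r})(τ×w); (ii) (w′ *_l τ *_r w″)⁻¹ = (w⁻¹)′ *_l τ⁻¹ *_r (w⁻¹)″. -/

import Mathlib

/-!
Statement 1: identities for the insertion `w′ *_l τ *_r w″ ∈ S(n+m)` (with `n = l + r`):

(i)  `w′ *_l τ *_r w″ = (12)^{m,l,r} ∘ (τ × w) ∘ ((12)^{m,l,r})⁻¹`, i.e. the insertion equals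
     `Ad((12)^{m,l,r})(τ × w)`;
(ii) `(w′ *_l τ *_r w″)⁻¹ = (w⁻¹)′ *_l τ⁻¹ *_r (w⁻¹)″`.

Here the insertion sends `i ↦ w i` if `i < l` and `w i < l`; `i ↦ w i + m` if `i < l` and
`w i ≥ l`; `i ↦ l + τ (i - l)` for `l ≤ i < l + m`; and for `i ≥ l + m`, `i ↦ w (i-m)` resp.
`w (i-m) + m` according to whether `w (i-m) < l` or not.  `(12)^{m,l,r} ∈ S(m+l+r)` sends the
first `m` letters `i ↦ i + l`, the next `l` letters back to the first `l` positions, and fixes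
the last `r` letters.  `τ × w ∈ S(m + (l+r))` acts as `τ` on the first `m` letters and as a
shifted copy of `w` on the rest.
-/

noncomputable section

open Equiv

/-- The identification `Fin (l+r) ⊕ Fin m ≃ Fin (l+r+m)` sending `inl j ↦ j` for `j < l`,
`inl j ↦ j + m` for `j ≥ l`, and `inr t ↦ l + t`.  Conjugating `w ⊕ τ` by it realizes
"splitting `w` apart and inserting `τ` in the middle". -/
def insertionCoding (l r m : ℕ) : (Fin (l + r) ⊕ Fin m) ≃ Fin (l + r + m) :=
  (Equiv.sumCongr (finSumFinEquiv.symm : Fin (l + r) ≃ Fin l ⊕ Fin r) (Equiv.refl (Fin m))).trans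
    ((Equiv.sumAssoc (Fin l) (Fin r) (Fin m)).trans
      ((Equiv.sumCongr (Equiv.refl (Fin l)) (Equiv.sumComm (Fin r) (Fin m))).trans
        ((Equiv.sumCongr (Equiv.refl (Fin l)) (finSumFinEquiv : Fin m ⊕ Fin r ≃ Fin (m + r))).trans
          ((finSumFinEquiv : Fin l ⊕ Fin (m + r) ≃ Fin (l + (m + r))).trans
            (finCongr (by omega))))))

/-- The insertion `w′ *_l τ *_r w″ ∈ S(n + m)` for `w ∈ S(n)`, `n = l + r`, `τ ∈ S(m)`. -/
def insertion (l r m : ℕ) (w : Equiv.Perm (Fin (l + r))) (τ : Equiv.Perm (Fin m)) :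
    Equiv.Perm (Fin (l + r + m)) :=
  (insertionCoding l r m).permCongr (Equiv.sumCongr w τ)

/-- The block permutation `(12)^{m,l,r} ∈ S(m+l+r)`. -/
def swapMLR (m l r : ℕ) : Equiv.Perm (Fin (m + l + r)) :=
  ((finSumFinEquiv.symm : Fin (m + l + r) ≃ Fin (m + l) ⊕ Fin r).trans
    ((Equiv.sumCongr (finSumFinEquiv.symm : Fin (m + l) ≃ Fin m ⊕ Fin l) (Equiv.refl (Fin r))).trans
      ((Equiv.sumCongr (Equiv.sumComm (Fin m) (Fin l)) (Equiv.refl (Fin r))).trans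
        ((Equiv.sumCongr (finSumFinEquiv : Fin l ⊕ Fin m ≃ Fin (l + m)) (Equiv.refl (Fin r))).trans
          ((finSumFinEquiv : Fin (l + m) ⊕ Fin r ≃ Fin (l + m + r)).trans
            (finCongr (by omega)))))))

/-- The juxtaposition `τ × w ∈ S(m + l + r)` of `τ ∈ S(m)` and `w ∈ S(l + r)`. -/
def juxtPair (m l r : ℕ) (τ : Equiv.Perm (Fin m)) (w : Equiv.Perm (Fin (l + r))) :
    Equiv.Perm (Fin (m + l + r)) :=
  ((finSumFinEquiv.trans (finCongr (by omega : m + (l + r) = m + l + r))).permCongr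
    (Equiv.sumCongr τ w))


theorem permCongr_inv {α β : Type*} (e : α ≃ β) (σ : Equiv.Perm α) :
    (e.permCongr σ)⁻¹ = e.permCongr σ⁻¹ := by
  ext x
  simp [Equiv.Perm.inv_def, Equiv.permCongr_def]

theorem permCongr_permCongr {α β γ : Type*} (e : α ≃ β) (f : β ≃ γ) (σ : Equiv.Perm α) :
    f.permCongr (e.permCongr σ) = (e.trans f).permCongr σ := by
  ext x; simp

theorem conj_eq_permCongr {α : Type*} (σ τ : Equiv.Perm α) :
    σ * τ * σ⁻¹ = Equiv.permCongr σ τ := by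
  ext x; rfl

theorem sumCongr_swap {α β : Type*} (w : Equiv.Perm α) (τ : Equiv.Perm β) :
    Equiv.sumCongr w τ = (Equiv.sumComm β α).permCongr (Equiv.sumCongr τ w) := by
  ext x; cases x <;> rfl

theorem insertionCoding_apply_inl (l r m : ℕ) (j : Fin (l + r)) :
    ((insertionCoding l r m) (Sum.inl j) : ℕ) = if (j : ℕ) < l then (j : ℕ) else (j : ℕ) + m := by
  induction j using Fin.addCases with
  | left j => simp [insertionCoding]
  | right j => simp [insertionCoding]; omega

theorem insertionCoding_apply_inr (l r m : ℕ) (t : Fin m) :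
    ((insertionCoding l r m) (Sum.inr t) : ℕ) = l + t := by
  simp [insertionCoding]

theorem swapMLR_apply (m l r : ℕ) (i : Fin (m + l + r)) :
    ((swapMLR m l r) i : ℕ) =
      if (i : ℕ) < m then (i : ℕ) + l else if (i : ℕ) < m + l then (i : ℕ) - m else (i : ℕ) := by
  induction i using Fin.addCases with
  | left j =>
    induction j using Fin.addCases with
    | left j => simp [swapMLR]; omega
    | right j => simp [swapMLR]
  | right j => simp [swapMLR]; omega

theorem key_equiv (l r m : ℕ) :
    (Equiv.sumComm (Fin m) (Fin (l + r))).trans (insertionCoding l r m)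
      = (finSumFinEquiv.trans (finCongr (by omega : m + (l + r) = m + l + r))).trans
          ((swapMLR m l r : Equiv.Perm (Fin (m + l + r))).trans
            (finCongr (by ring : m + l + r = l + r + m))) := by
  ext x
  cases x with
  | inl a =>
    simp only [Equiv.trans_apply, Equiv.sumComm_apply, Sum.swap_inl, insertionCoding_apply_inr,
      finCongr_apply, Fin.coe_cast, swapMLR_apply, finSumFinEquiv_apply_left, Fin.coe_castAdd]
    have ha := a.isLt
    split_ifs
    omega
  | inr b =>
    simp only [Equiv.trans_apply, Equiv.sumComm_apply, Sum.swap_inr, insertionCoding_apply_inl,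
      finCongr_apply, Fin.coe_cast, swapMLR_apply, finSumFinEquiv_apply_right, Fin.coe_natAdd]
    have hb := b.isLt
    split_ifs <;> omega

theorem insertion_eq_conj_and_inv (l r m : ℕ)
    (w : Equiv.Perm (Fin (l + r))) (τ : Equiv.Perm (Fin m)) :
    insertion l r m w τ =
      (finCongr (by omega : m + l + r = l + r + m)).permCongr
        (swapMLR m l r * juxtPair m l r τ w * (swapMLR m l r)⁻¹)
    ∧ (insertion l r m w τ)⁻¹ = insertion l r m w⁻¹ τ⁻¹ := by
  constructor
  · rw [insertion, juxtPair, conj_eq_permCongr, permCongr_permCongr, permCongr_permCongr,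
      sumCongr_swap w τ, permCongr_permCongr, key_equiv]
  · rw [insertion, insertion, permCongr_inv]
    congr 1

end
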